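/- Let γ_L(n) denote the number of subsets W ⊆ H_n with D(𝔟_ℓ|W) ≤ N(𝔟_ℓ) − s_ℓ for 1 ≤ ℓ ≤ L (where H_n is the box Følner set in O_K). Then γ_L(nm) ≤ γ_L(n)^{m^d} for all n, m, L ≥ 1. -/

import Mathlib

set_option synthInstance.maxHeartbeats 1000000

open scoped Classical
open NumberField

/-- The box Følner set `H_n = ι({−n,…,n}^d)` in `𝓞 K`. -/
noncomputable def boxH {K : Type*} [Field K] [NumberField K] {d : ℕ}
    (ι : (Fin d → ℤ) ≃+ 𝓞 K) (n : ℕ) : Finset (𝓞 K) :=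
  (Fintype.piFinset (fun _ : Fin d => Finset.Icc (-(n : ℤ)) (n : ℤ))).image ι

/-- `γ_L(n)`: the number of subsets `W ⊆ H_n` with `D(𝔟_ℓ|W) ≤ N(𝔟_ℓ) − s_ℓ`
for `1 ≤ ℓ ≤ L`. -/
noncomputable def gammaL {K : Type*} [Field K] [NumberField K] {d : ℕ}
    (ι : (Fin d → ℤ) ≃+ 𝓞 K) (𝔟 : ℕ → Ideal (𝓞 K)) (s : ℕ → ℕ) (L n : ℕ) : ℕ :=
  ((boxH ι n).powerset.filter (fun W => ∀ ℓ < L,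
    Set.ncard ((Ideal.Quotient.mk (𝔟 ℓ)) '' (↑W : Set (𝓞 K)))
      ≤ Nat.card (𝓞 K ⧸ 𝔟 ℓ) - s ℓ)).card

/-- Cell index of an integer `j ∈ [-nm, nm]` in the covering of the big box
by translates of the small box. -/
def qv (n m : ℕ) (j : ℤ) : ℕ := ((j + n * m) / (2 * n + 1)).toNat % m

/-- Translation offset of cell `a`. -/
def tv (n m : ℕ) (a : ℕ) : ℤ := (2 * n + 1) * a + n - n * m

lemma qv_lt (n : ℕ) {m : ℕ} (hm : 1 ≤ m) (j : ℤ) : qv n m j < m :=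
  Nat.mod_lt _ hm

lemma decomp (n m : ℕ) (hm : 1 ≤ m) (j : ℤ) (h1 : -(n * m : ℤ) ≤ j) (h2 : j ≤ (n * m : ℤ)) :
    j - tv n m (qv n m j) ∈ Finset.Icc (-(n : ℤ)) (n : ℤ) := by
  have hpos : (0 : ℤ) < 2 * n + 1 := by positivity
  set q : ℤ := (j + n * m) / (2 * n + 1) with hq
  have hq0 : 0 ≤ q := Int.ediv_nonneg (by linarith) (by linarith)
  have hqm : q < m := by
    rw [hq, Int.ediv_lt_iff_lt_mul hpos]
    have : (1 : ℤ) ≤ m := by exact_mod_cast hm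
    nlinarith
  have hqv : (qv n m j : ℤ) = q := by
    have h1' : ((j + n * m) / (2 * n + 1)).toNat < m := by omega
    unfold qv
    rw [Nat.mod_eq_of_lt h1']
    omega
  have hmod := Int.emod_add_mul_ediv (j + n * m) (2 * n + 1)
  have hmn : 0 ≤ (j + n * m) % (2 * n + 1) := Int.emod_nonneg _ (by omega)
  have hmx : (j + n * m) % (2 * n + 1) < 2 * n + 1 := Int.emod_lt_of_pos _ hpos
  simp only [Finset.mem_Icc, tv, hqv]
  constructor <;> linarith [hmod]

lemma ncard_mk_image_sub {R : Type*} [CommRing R] (I : Ideal R) (S : Set R) (c : R) :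
    Set.ncard ((Ideal.Quotient.mk I) '' ((fun x => x - c) '' S))
      = Set.ncard ((Ideal.Quotient.mk I) '' S) := by
  have h : (Ideal.Quotient.mk I) '' ((fun x => x - c) '' S)
      = (fun y => y - Ideal.Quotient.mk I c) '' ((Ideal.Quotient.mk I) '' S) := by
    rw [← Set.image_comp, ← Set.image_comp]
    apply Set.image_congr
    intro x _
    simp [map_sub]
  rw [h, Set.ncard_image_of_injective _ sub_left_injective]

lemma mem_boxH {K : Type*} [Field K] [NumberField K] {d : ℕ}
    (ι : (Fin d → ℤ) ≃+ 𝓞 K) (n : ℕ) (w : 𝓞 K) :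
    w ∈ boxH ι n ↔ ∀ i, ι.symm w i ∈ Finset.Icc (-(n : ℤ)) (n : ℤ) := by
  simp only [boxH, Finset.mem_image, Fintype.mem_piFinset]
  constructor
  · rintro ⟨v, hv, rfl⟩ i
    simpa using hv i
  · intro h
    exact ⟨ι.symm w, h, ι.apply_symm_apply w⟩

lemma gammaL_eq {K : Type*} [Field K] [NumberField K] {d : ℕ}
    (ι : (Fin d → ℤ) ≃+ 𝓞 K) (𝔟 : ℕ → Ideal (𝓞 K)) (s : ℕ → ℕ) (L n : ℕ) :
    gammaL ι 𝔟 s L n = ((boxH ι n).powerset.filter (fun W : Finset (𝓞 K) => ∀ ℓ < L,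
      Set.ncard ((Ideal.Quotient.mk (𝔟 ℓ)) '' (↑W : Set (𝓞 K)))
        ≤ Nat.card (𝓞 K ⧸ 𝔟 ℓ) - s ℓ)).card := by
  unfold gammaL
  rw [show ((boxH ι n).powerset >>= fun a => pure (↑a : Set (𝓞 K)))
      = (boxH ι n).powerset.image (fun a : Finset (𝓞 K) => (↑a : Set (𝓞 K))) from Finset.sup_singleton_apply _ _]
  rw [Finset.filter_image]
  rw [Finset.card_image_of_injective _ Finset.coe_injective]

/-- subadditivity of pattern counts: `γ_L(nm) ≤ γ_L(n)^{m^d}`. -/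
theorem stmt16 {K : Type*} [Field K] [NumberField K] {d : ℕ}
    (ι : (Fin d → ℤ) ≃+ 𝓞 K) (𝔟 : ℕ → Ideal (𝓞 K)) (s : ℕ → ℕ)
    [∀ ℓ, Finite (𝓞 K ⧸ 𝔟 ℓ)] (hprop : ∀ ℓ, 𝔟 ℓ ≠ ⊤) (hbot : ∀ ℓ, 𝔟 ℓ ≠ ⊥)
    (hs : ∀ ℓ, 1 ≤ s ℓ) (L n m : ℕ) (hn : 1 ≤ n) (hm : 1 ≤ m) (hL : 1 ≤ L) :
    gammaL ι 𝔟 s L (n * m) ≤ gammaL ι 𝔟 s L n ^ (m ^ d) := by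
  classical
  rw [gammaL_eq, gammaL_eq]
  set P : Finset (𝓞 K) → Prop := fun W => ∀ ℓ < L,
    Set.ncard ((Ideal.Quotient.mk (𝔟 ℓ)) '' (↑W : Set (𝓞 K)))
      ≤ Nat.card (𝓞 K ⧸ 𝔟 ℓ) - s ℓ with hP
  set Sbig : Finset (Finset (𝓞 K)) := (boxH ι (n * m)).powerset.filter P with hSbig
  set Ssmall : Finset (Finset (𝓞 K)) := (boxH ι n).powerset.filter P with hSsmall
  -- offset element for a cell index
  set c : (Fin d → Fin m) → 𝓞 K := fun a => ι (fun i => tv n m (a i)) with hc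
  -- the cell index of an element
  set idx : 𝓞 K → (Fin d → Fin m) := fun w i => ⟨qv n m (ι.symm w i), qv_lt n hm _⟩
    with hidx
  -- the decomposition map
  set f : Finset (𝓞 K) → ((Fin d → Fin m) → Finset (𝓞 K)) := fun W a =>
    (W.filter (fun w => idx w = a)).image (fun w => w - c a) with hf
  have keymem : ∀ (W : Finset (𝓞 K)) (w : 𝓞 K), w ∈ W ↔ w - c (idx w) ∈ f W (idx w) := by
    intro W w
    constructor
    · intro hw
      exact Finset.mem_image_of_mem _ (Finset.mem_filter.2 ⟨hw, rfl⟩)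
    · intro hw
      obtain ⟨w', hw', he⟩ := Finset.mem_image.1 hw
      have : w' = w := by
        have := sub_left_injective (b := c (idx w)) he
        exact this
      rw [← this]
      exact (Finset.mem_filter.1 hw').1
  have hmaps : ∀ W ∈ Sbig, f W ∈ Fintype.piFinset (fun _ : (Fin d → Fin m) => Ssmall) := by
    intro W hW
    rw [Fintype.mem_piFinset]
    intro a
    obtain ⟨hWsub, hWP⟩ := Finset.mem_filter.1 hW
    rw [Finset.mem_powerset] at hWsub
    rw [hSsmall, Finset.mem_filter, Finset.mem_powerset]
    constructor
    · -- f W a ⊆ boxH ι n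
      intro x hx
      obtain ⟨w, hw, rfl⟩ := Finset.mem_image.1 hx
      obtain ⟨hwW, hwa⟩ := Finset.mem_filter.1 hw
      have hwbox := (mem_boxH ι (n * m) w).1 (hWsub hwW)
      rw [mem_boxH]
      intro i
      have hsymm : ι.symm (w - c a) i = ι.symm w i - tv n m ((a i : ℕ)) := by
        rw [map_sub, hc]
        simp
      rw [hsymm]
      have hai : ((a i : ℕ)) = qv n m (ι.symm w i) := by
        rw [← hwa]
      rw [hai]
      have := hwbox i
      rw [Finset.mem_Icc] at this
      have h1 : -((n : ℤ) * m) ≤ ι.symm w i := by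
        have := this.1; push_cast at this ⊢; linarith
      have h2 : ι.symm w i ≤ (n : ℤ) * m := by
        have := this.2; push_cast at this ⊢; linarith
      have := decomp n m hm (ι.symm w i) (by exact_mod_cast h1) (by exact_mod_cast h2)
      exact_mod_cast this
    · -- the pattern condition
      intro ℓ hℓ
      have himg : (↑(f W a) : Set (𝓞 K))
          = (fun x => x - c a) '' (↑(W.filter (fun w => idx w = a)) : Set (𝓞 K)) := by
        rw [hf]
        simp [Finset.coe_image]
      calc Set.ncard ((Ideal.Quotient.mk (𝔟 ℓ)) '' (↑(f W a) : Set (𝓞 K)))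
          = Set.ncard ((Ideal.Quotient.mk (𝔟 ℓ)) ''
              (↑(W.filter (fun w => idx w = a)) : Set (𝓞 K))) := by
            rw [himg, ncard_mk_image_sub]
        _ ≤ Set.ncard ((Ideal.Quotient.mk (𝔟 ℓ)) '' (↑W : Set (𝓞 K))) := by
            apply Set.ncard_le_ncard
            · exact Set.image_mono (by exact_mod_cast Finset.filter_subset _ W)
            · exact (W.finite_toSet.image _)
        _ ≤ Nat.card (𝓞 K ⧸ 𝔟 ℓ) - s ℓ := hWP ℓ hℓ
  have hinj : Set.InjOn f Sbig := by
    intro W hW W' hW' hWW'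
    ext w
    rw [keymem W w, keymem W' w, hWW']
  show Sbig.card ≤ Ssmall.card ^ (m ^ d)
  calc Sbig.card
      ≤ (Fintype.piFinset (fun _ : (Fin d → Fin m) => Ssmall)).card :=
        Finset.card_le_card_of_injOn f hmaps hinj
    _ = Ssmall.card ^ (m ^ d) := by
        rw [Fintype.card_piFinset]
        rw [Finset.prod_const]
        congr 1
        simp [Finset.card_univ]
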